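/- Let Γ' be a group acting on a set S with only finitely many Γ'-orbits and with all stabilizers Γ'_s finite, and let Γ be a subgroup of Γ' of finite index n = [Γ' : Γ]. Then the Γ-action on S has only finitely many orbits and all Γ-stabilizers are finite, and the covolumes satisfy Vol(Γ\\S) = n · Vol(Γ'\\S), where Vol(Δ\\S) = Σ_{s ∈ Δ\S} 1/|Δ_s| (the sum, in ℚ, over a set of representatives of the Δ-orbits, of the reciprocals of the stabilizer orders; this is well defined since stabilizers of points in the same orbit are conjugate). In particular an overgroup of index n corresponds to an n-sheeted covering, as in the paper's Corollary 21. -/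

import Mathlib

open MulAction

section Aux
variable {Γ' S : Type*} [Group Γ'] [MulAction Γ' S] (Γ : Subgroup Γ')

/-- The stabilizer in `Γ` of `x = k • s` is equivalent to the stabilizer, in
`H := stabilizer Γ' s`, of the coset `k⁻¹Γ`. -/
noncomputable def stabEquiv (s : S) (k : Γ') :
    stabilizer Γ (k • s) ≃
      stabilizer (stabilizer Γ' s) (QuotientGroup.mk k⁻¹ : Γ' ⧸ Γ) where
  toFun γ := ⟨⟨k⁻¹ * (γ.1 : Γ') * k, by
      have hγ : (γ.1 : Γ') • (k • s) = k • s := γ.2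
      simp [mem_stabilizer_iff, mul_smul, hγ]⟩, by
      have hγΓ : (γ.1 : Γ') ∈ Γ := γ.1.2
      show (⟨k⁻¹ * (γ.1 : Γ') * k, _⟩ : stabilizer Γ' s) • (QuotientGroup.mk k⁻¹ : Γ' ⧸ Γ)
        = QuotientGroup.mk k⁻¹
      show (k⁻¹ * (γ.1 : Γ') * k) • (QuotientGroup.mk k⁻¹ : Γ' ⧸ Γ) = QuotientGroup.mk k⁻¹
      rw [MulAction.Quotient.smul_mk, QuotientGroup.eq]
      group
      simpa using hγΓ⟩
  invFun h := ⟨⟨k * (h.1 : Γ') * k⁻¹, by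
      have hh : (h.1 : Γ') • (QuotientGroup.mk k⁻¹ : Γ' ⧸ Γ) = QuotientGroup.mk k⁻¹ := h.2
      rw [MulAction.Quotient.smul_mk, QuotientGroup.eq] at hh
      simp only [smul_eq_mul] at hh
      have : k * (h.1 : Γ') * k⁻¹ = (((h.1:Γ') * k⁻¹)⁻¹ * k⁻¹)⁻¹ := by group
      rw [this]
      exact Γ.inv_mem hh⟩, by
      have hs : (h.1 : Γ') • s = s := h.1.2
      simp [mem_stabilizer_iff, Subgroup.smul_def, mul_smul, hs]⟩
  left_inv γ := by
    ext
    show k * (k⁻¹ * (γ.1 : Γ') * k) * k⁻¹ = (γ.1 : Γ')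
    group
  right_inv h := by
    ext
    show k⁻¹ * (k * (h.1 : Γ') * k⁻¹) * k = (h.1 : Γ')
    group

end Aux

open scoped Classical in
lemma perOrbit {Γ' S : Type*} [Group Γ'] [MulAction Γ' S] (Γ : Subgroup Γ')
    [Finite (Γ' ⧸ Γ)] (s : S) [Finite (stabilizer Γ' s)]
    (T : Finset S) (hT1 : ∀ x ∈ T, x ∈ orbit Γ' s)
    (hT2 : ∀ y ∈ orbit Γ' s, ∃! x, x ∈ T ∧ x ∈ orbit Γ y) :
    ∑ x ∈ T, (1 : ℚ) / (Nat.card (stabilizer Γ x) : ℚ) =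
      (Γ.index : ℚ) / (Nat.card (stabilizer Γ' s) : ℚ) := by
  classical
  set H := stabilizer Γ' s with hH
  set X := Γ' ⧸ Γ with hX
  -- choose a group element moving s to x, for x in the orbit
  have hkex : ∀ x ∈ orbit Γ' s, ∃ g : Γ', g • s = x := fun x hx => hx
  set k : S → Γ' := fun x => if h : x ∈ orbit Γ' s then Classical.choose (hkex x h) else 1
    with hkdef
  have hk : ∀ x ∈ orbit Γ' s, k x • s = x := by
    intro x hx
    simp only [hkdef, dif_pos hx]
    exact Classical.choose_spec (hkex x hx)
  set c : S → X := fun x => QuotientGroup.mk (k x)⁻¹ with hcdef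
  have hHfin : (0:ℚ) < (Nat.card H : ℚ) := by
    exact_mod_cast Nat.card_pos
  -- Step A : pointwise identity
  have stepA : ∀ x ∈ T, (1 : ℚ) / (Nat.card (stabilizer Γ x) : ℚ) =
      (Nat.card (orbit H (c x)) : ℚ) / (Nat.card H : ℚ) := by
    intro x hx
    have hxo := hT1 x hx
    have hcard : Nat.card (stabilizer Γ x) = Nat.card (stabilizer H (c x)) := by
      have := Nat.card_congr (stabEquiv Γ s (k x))
      rw [hk x hxo] at this
      exact this
    have horb : Nat.card (orbit H (c x)) = (stabilizer H (c x)).index := by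
      rw [Subgroup.index_eq_card]
      exact Nat.card_congr (orbitEquivQuotientStabilizer H (c x))
    have hmul : (stabilizer H (c x)).index * Nat.card (stabilizer H (c x)) = Nat.card H :=
      Subgroup.index_mul_card _
    have hstabfin : Finite (stabilizer H (c x)) := Subtype.finite
    have hpos : (0:ℚ) < (Nat.card (stabilizer H (c x)) : ℚ) := by exact_mod_cast Nat.card_pos
    rw [hcard, horb]
    rw [div_eq_div_iff hpos.ne' hHfin.ne', one_mul, ← hmul]
    push_cast
    ring
  rw [Finset.sum_congr rfl stepA, ← Finset.sum_div]
  congr 1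
  -- Step B : the orbit cardinalities sum to the index
  have fX : Fintype X := Fintype.ofFinite X
  have fQ : Fintype (orbitRel.Quotient H X) := Fintype.ofFinite _
  have key : ∑ x ∈ T, (Nat.card (orbit H (c x)) : ℚ) =
      ∑ ω : orbitRel.Quotient H X, (Nat.card ω.orbit : ℚ) := by
    refine Finset.sum_bij (fun x _ => Quotient.mk (orbitRel H X) (c x)) (fun _ _ => Finset.mem_univ _)
      ?_ ?_ ?_
    · -- injective
      intro a ha b hb hab
      have hrel : (c a) ∈ orbit H (c b) := Quotient.eq.mp hab
      obtain ⟨h, hh⟩ := hrel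
      -- h • c b = c a
      have hh' : (h : Γ') • (QuotientGroup.mk (k b)⁻¹ : X) = QuotientGroup.mk (k a)⁻¹ := hh
      rw [MulAction.Quotient.smul_mk, QuotientGroup.eq] at hh'
      simp only [smul_eq_mul] at hh'
      -- ((h * (k b)⁻¹)⁻¹ * (k a)⁻¹ ∈ Γ
      set γ : Γ' := ((h : Γ') * (k b)⁻¹)⁻¹ * (k a)⁻¹ with hγdef
      have hγΓ : γ ∈ Γ := hh'
      have hsmul : (⟨γ, hγΓ⟩ : Γ) • a = b := by
        rw [Subgroup.smul_def]
        show γ • a = b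
        have hss : (h : Γ') • s = s := h.2
        rw [← hk a (hT1 a ha), ← hk b (hT1 b hb), hγdef]
        rw [← mul_smul]
        have : (((h:Γ') * (k b)⁻¹)⁻¹ * (k a)⁻¹) * k a = k b * (h:Γ')⁻¹ := by group
        rw [this, mul_smul]
        rw [inv_smul_eq_iff.mpr hss.symm]
      have hmem : a ∈ orbit Γ b := by
        refine ⟨(⟨γ, hγΓ⟩ : Γ)⁻¹, ?_⟩
        rw [inv_smul_eq_iff]
        exact hsmul.symm
      obtain ⟨z, hz, huniq⟩ := hT2 b (hT1 b hb)
      have h1 := huniq a ⟨ha, hmem⟩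
      have h2 := huniq b ⟨hb, mem_orbit_self b⟩
      rw [h1, h2]
    · -- surjective
      intro ω _
      obtain ⟨q, rfl⟩ := Quotient.exists_rep ω
      obtain ⟨g, rfl⟩ := QuotientGroup.mk_surjective q
      have hy : g⁻¹ • s ∈ orbit Γ' s := ⟨g⁻¹, rfl⟩
      obtain ⟨x, ⟨hxT, hxo⟩, _⟩ := hT2 _ hy
      obtain ⟨γ, hγ⟩ := hxo
      have hγ' : (γ : Γ') • (g⁻¹ • s) = x := hγ
      have hxs : x ∈ orbit Γ' s := ⟨(γ : Γ') * g⁻¹, by show ((γ : Γ') * g⁻¹) • s = x; rw [mul_smul]; exact hγ'⟩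
      have hkxs : k x • s = x := hk x hxs
      have hmemH : g * (γ : Γ')⁻¹ * k x ∈ H := by
        rw [hH, mem_stabilizer_iff, mul_smul, mul_smul, hkxs,
          inv_smul_eq_iff.mpr hγ'.symm, ← mul_smul, mul_inv_cancel, one_smul]
      refine ⟨x, hxT, ?_⟩
      refine (Quotient.eq.mpr ?_)
      refine ⟨⟨(g * (γ : Γ')⁻¹ * k x)⁻¹, (stabilizer Γ' s).inv_mem hmemH⟩, ?_⟩
      show ((g * (γ : Γ')⁻¹ * k x)⁻¹ : Γ') • (QuotientGroup.mk g : X) = QuotientGroup.mk (k x)⁻¹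
      rw [MulAction.Quotient.smul_mk, QuotientGroup.eq]
      simp only [smul_eq_mul]
      have : ((g * (γ : Γ')⁻¹ * k x)⁻¹ * g)⁻¹ * (k x)⁻¹ = (γ : Γ')⁻¹ := by group
      rw [this]
      exact Γ.inv_mem γ.2
    · -- values
      intro x hx
      rfl
  rw [key]
  have hsum : ∑ ω : orbitRel.Quotient H X, (Nat.card ω.orbit : ℚ) = (Nat.card X : ℚ) := by
    have h1 := Nat.card_congr (selfEquivSigmaOrbits' H X)
    rw [Nat.card_eq_fintype_card, Nat.card_eq_fintype_card, Fintype.card_sigma] at h1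
    have hnat : ∑ ω : orbitRel.Quotient H X, Nat.card ω.orbit = Nat.card X := by
      simp only [Nat.card_eq_fintype_card]
      exact h1.symm
    exact_mod_cast hnat
  rw [hsum, Subgroup.index_eq_card]


/-- Let `Γ'` act on `S` with finitely many orbits and finite stabilizers, and
let `Γ ≤ Γ'` have finite index `n`.  Then the `Γ`-action has finitely many orbits and finite
stabilizers, and for any sets `R`, `R'` of representatives of the `Γ`-orbits resp. `Γ'`-orbits,
`Vol(Γ\S) = Σ_{x ∈ R} 1/|Γ_x|` equals `n · Vol(Γ'\S) = n · Σ_{x ∈ R'} 1/|Γ'_x|` in `ℚ`. -/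
theorem covolume_of_finite_index_subgroup
    {Γ' S : Type*} [Group Γ'] [MulAction Γ' S]
    (horb : Finite (MulAction.orbitRel.Quotient Γ' S))
    (hstab : ∀ s : S, Finite (MulAction.stabilizer Γ' s))
    (Γ : Subgroup Γ') (n : ℕ) (hn : Γ.index = n) (hn0 : n ≠ 0) :
    Finite (MulAction.orbitRel.Quotient Γ S) ∧
    (∀ s : S, Finite (MulAction.stabilizer Γ s)) ∧
    (∀ R R' : Finset S,
      (∀ y : S, ∃! x, x ∈ R ∧ x ∈ MulAction.orbit Γ y) →
      (∀ y : S, ∃! x, x ∈ R' ∧ x ∈ MulAction.orbit Γ' y) →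
      ∑ x ∈ R, (1 : ℚ) / (Nat.card (MulAction.stabilizer Γ x) : ℚ) =
        (n : ℚ) * ∑ x ∈ R', (1 : ℚ) / (Nat.card (MulAction.stabilizer Γ' x) : ℚ)) := by
  classical
  have hidx : Γ.index ≠ 0 := hn ▸ hn0
  have hfinX : Finite (Γ' ⧸ Γ) := Nat.finite_of_card_ne_zero (by
    rwa [← Subgroup.index_eq_card])
  refine ⟨Subgroup.finite_quotient_of_finite_quotient_of_index_ne_zero hidx, ?_, ?_⟩
  · intro s
    have := hstab s
    refine Finite.of_injective
      (fun g : stabilizer Γ s => (⟨(g.1 : Γ'), g.2⟩ : stabilizer Γ' s)) ?_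
    intro a b hab
    simp only [Subtype.mk.injEq] at hab
    ext
    exact congrArg (fun z : stabilizer Γ' s => (z : Γ')) hab
  · intro R R' hR hR'
    -- orbit symmetry helper
    have hsym : ∀ (a b : S), a ∈ orbit Γ' b → b ∈ orbit Γ' a := by
      rintro a b ⟨g, rfl⟩
      exact ⟨g⁻¹, by simp⟩
    -- the partition of R along Γ'-orbits of elements of R'
    have hpart : R = R'.biUnion (fun x' => R.filter (fun x => x ∈ orbit Γ' x')) := by
      ext x
      simp only [Finset.mem_biUnion, Finset.mem_filter]
      constructor
      · intro hx
        obtain ⟨x', ⟨hx'R, hx'o⟩, _⟩ := hR' x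
        exact ⟨x', hx'R, hx, hsym _ _ hx'o⟩
      · rintro ⟨x', _, hx, _⟩
        exact hx
    have hdisj : ∀ a ∈ R', ∀ b ∈ R', a ≠ b →
        Disjoint (R.filter (fun x => x ∈ orbit Γ' a)) (R.filter (fun x => x ∈ orbit Γ' b)) := by
      intro a ha b hb hab
      rw [Finset.disjoint_left]
      intro x hxa hxb
      apply hab
      obtain ⟨_, hoa⟩ := Finset.mem_filter.mp hxa
      obtain ⟨_, hob⟩ := Finset.mem_filter.mp hxb
      obtain ⟨z, _, huniq⟩ := hR' x
      rw [huniq a ⟨ha, hsym _ _ hoa⟩, huniq b ⟨hb, hsym _ _ hob⟩]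
    rw [hpart, Finset.sum_biUnion hdisj]
    have hinner : ∀ x' ∈ R',
        ∑ x ∈ R.filter (fun x => x ∈ orbit Γ' x'),
            (1 : ℚ) / (Nat.card (stabilizer Γ x) : ℚ) =
          (Γ.index : ℚ) / (Nat.card (stabilizer Γ' x') : ℚ) := by
      intro x' _
      have := hstab x'
      refine perOrbit Γ x' _ (fun x hx => (Finset.mem_filter.mp hx).2) ?_
      intro y hy
      obtain ⟨x, ⟨hxR, hxo⟩, huniq⟩ := hR y
      refine ⟨x, ⟨Finset.mem_filter.mpr ⟨hxR, ?_⟩, hxo⟩, ?_⟩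
      · obtain ⟨g1, hg1⟩ := orbit_subgroup_subset Γ y hxo
        obtain ⟨g2, hg2⟩ := hy
        exact ⟨g1 * g2, by show (g1 * g2) • x' = x; rw [mul_smul]; show g1 • (g2 • x') = x; rw [show g2 • x' = y from hg2]; exact hg1⟩
      · rintro z ⟨hz1, hz2⟩
        exact huniq z ⟨(Finset.mem_filter.mp hz1).1, hz2⟩
    rw [Finset.sum_congr rfl hinner, hn, Finset.mul_sum]
    refine Finset.sum_congr rfl fun x' _ => ?_
    rw [mul_one_div]
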